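/- arXiv:2602.03846 — 2 statements merged into one kernel-verified Lean document; each statement's English description precedes it below -/
import Mathlib

section
/- Consider a feedforward network with L layers: given dimensions d₀,…,d_L, weight matrices W⁽ℓ⁾ ∈ ℝ^{d_ℓ × d_{ℓ−1}}, and arbitrary activation maps σ⁽ℓ⁾ : ℝ^{d_ℓ} → ℝ^{d_ℓ}, define post-activations recursively by h⁽⁰⁾(x) = x and h⁽ℓ⁾(x) = σ⁽ℓ⁾(W⁽ℓ⁾ h⁽ℓ⁻¹⁾(x)), and let f_W(x) := h⁽ᴸ⁾(x) denote the network output. Let Y be a measurable label space, P₀ a measure on ℝ^{d₀} × Y, ℓ : ℝ^{d_L} × Y → ℝ a loss function, and define the old-task loss L₀(W) := ∫ ℓ(f_W(x), y) dP₀(x, y). Let ΔW⁽ℓ⁾ be perturbation matrices. If for P₀-almost every (x, y) one has ΔW⁽ℓ⁾ · h⁽ℓ⁻¹⁾(x) = 0 for every layer ℓ = 1,…,L (where h⁽ℓ⁾ are the post-activations of the unperturbed network), then L₀(W + ΔW) = L₀(W), i.e., the forgetting F₀ := L₀(W + ΔW) − L₀(W) equals zero. -/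
open MeasureTheory

/-- **Per-layer orthogonality on `P₀` yields no forgetting.**
A feedforward network with weights `W ℓ` and arbitrary activations `σ ℓ`
computes post-activations `h x 0 = x`, `h x (ℓ+1) = σ ℓ (W ℓ *ᵥ h x ℓ)`, with
output `f_W(x) = h x (Fin.last L)`; the perturbed network uses weights
`W ℓ + ΔW ℓ` and the same activations.  If for `P₀`-almost every `(x, y)` one
has `ΔW ℓ *ᵥ h x ℓ = 0` for every layer `ℓ`, then the old-task loss
`L₀(W) = ∫ ℓoss (f_W x) y dP₀` is unchanged, i.e. the forgetting
`L₀(W + ΔW) − L₀(W)` is zero. -/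
theorem stmt1
    (L : ℕ) (d : Fin (L + 1) → ℕ)
    (Y : Type*) [MeasurableSpace Y]
    (P₀ : Measure ((Fin (d 0) → ℝ) × Y))
    (loss : (Fin (d (Fin.last L)) → ℝ) → Y → ℝ)
    (W ΔW : ∀ ℓ : Fin L, Matrix (Fin (d ℓ.succ)) (Fin (d ℓ.castSucc)) ℝ)
    (σ : ∀ ℓ : Fin L, (Fin (d ℓ.succ) → ℝ) → (Fin (d ℓ.succ) → ℝ))
    (h htilde : (Fin (d 0) → ℝ) → ∀ ℓ : Fin (L + 1), Fin (d ℓ) → ℝ)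
    (h0 : ∀ x, h x 0 = x)
    (htilde0 : ∀ x, htilde x 0 = x)
    (hrec : ∀ x, ∀ ℓ : Fin L, h x ℓ.succ = σ ℓ ((W ℓ).mulVec (h x ℓ.castSucc)))
    (htilderec : ∀ x, ∀ ℓ : Fin L,
      htilde x ℓ.succ = σ ℓ ((W ℓ + ΔW ℓ).mulVec (htilde x ℓ.castSucc)))
    (horth : ∀ᵐ p ∂P₀, ∀ ℓ : Fin L, (ΔW ℓ).mulVec (h p.1 ℓ.castSucc) = 0) :
    ∫ p, loss (htilde p.1 (Fin.last L)) p.2 ∂P₀ =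
      ∫ p, loss (h p.1 (Fin.last L)) p.2 ∂P₀ := by
  refine integral_congr_ae ?_
  filter_upwards [horth] with p hp
  have key : ∀ ℓ : Fin (L + 1), htilde p.1 ℓ = h p.1 ℓ := by
    intro ℓ
    induction ℓ using Fin.induction with
    | zero => rw [h0, htilde0]
    | succ ℓ ih =>
      rw [htilderec, hrec, ih, Matrix.add_mulVec, hp ℓ, add_zero]
  rw [key]
end

section
/- Let θ₀ ∈ ℝⁿ, let L₀ : ℝⁿ → ℝ, let H₀ ∈ ℝ^{n×n} be symmetric, let G ∈ ℝ^{n×n} be positive semidefinite, and let S be a nonzero linear subspace of ℝⁿ. Define the drift radius ε(S) by ε(S)² := sup{ vᵀGv : v ∈ S, ‖v‖₂ = 1 }. Assume: (i) (Taylor control at a stationary point) there exist ρ₀ > 0 and C_T ≥ 0 such that |L₀(θ₀ + Δθ) − L₀(θ₀) − ½ ΔθᵀH₀Δθ| ≤ C_T ‖Δθ‖₂³ for all Δθ with ‖Δθ‖₂ ≤ ρ₀; (ii) (curvature link) there exists μ₀ > 0 such that ΔθᵀH₀Δθ ≥ μ₀ ΔθᵀGΔθ for all Δθ ∈ S. Then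 for every ρ with 0 < ρ ≤ ρ₀ there exists Δθ ∈ S with ‖Δθ‖₂ = ρ such that L₀(θ₀ + Δθ) − L₀(θ₀) ≥ (μ₀/2) ε(S)² ρ² − C_T ρ³. -/
open scoped RealInnerProductSpace

/-- The quadratic form `v ↦ vᵀ G v` of a matrix `G`, on Euclidean space. -/
noncomputable def quadForm {n : ℕ} (G : Matrix (Fin n) (Fin n) ℝ)
    (v : EuclideanSpace ℝ (Fin n)) : ℝ :=
  ⟪v, Matrix.toEuclideanLin G v⟫

lemma quadForm_smul {n : ℕ} (G : Matrix (Fin n) (Fin n) ℝ) (c : ℝ)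
    (v : EuclideanSpace ℝ (Fin n)) : quadForm G (c • v) = c ^ 2 * quadForm G v := by
  simp only [quadForm, map_smul, real_inner_smul_left, real_inner_smul_right]
  ring

/-- **Lower bound on worst-case forgetting under approximate orthogonality.**
Let `θ₀ ∈ ℝⁿ`, `L₀ : ℝⁿ → ℝ`, `H₀` symmetric, `G` positive semidefinite, and
`S` a nonzero subspace of `ℝⁿ`, with drift radius `ε(S)` given by
`ε(S)² = sup { vᵀGv : v ∈ S, ‖v‖₂ = 1 }`.  Assume Taylor control at a
stationary point (`|L₀(θ₀+Δθ) − L₀(θ₀) − ½ΔθᵀH₀Δθ| ≤ C_T‖Δθ‖³` for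
`‖Δθ‖ ≤ ρ₀`) and the curvature link `ΔθᵀH₀Δθ ≥ μ₀ ΔθᵀGΔθ` on `S`.  Then for
every `0 < ρ ≤ ρ₀` there is `Δθ ∈ S` with `‖Δθ‖₂ = ρ` and
`L₀(θ₀+Δθ) − L₀(θ₀) ≥ (μ₀/2) ε(S)² ρ² − C_T ρ³`. -/
theorem stmt4
    (n : ℕ)
    (θ₀ : EuclideanSpace ℝ (Fin n))
    (L₀ : EuclideanSpace ℝ (Fin n) → ℝ)
    (H₀ G : Matrix (Fin n) (Fin n) ℝ)
    (hH₀ : H₀.IsSymm) (hG : G.PosSemidef)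
    (S : Submodule ℝ (EuclideanSpace ℝ (Fin n))) (hS : S ≠ ⊥)
    (epsSq : ℝ)
    (heps : epsSq = sSup {r : ℝ | ∃ v : EuclideanSpace ℝ (Fin n),
      v ∈ S ∧ ‖v‖ = 1 ∧ r = quadForm G v})
    (ρ₀ C_T : ℝ) (hρ₀ : 0 < ρ₀) (hCT : 0 ≤ C_T)
    (hTaylor : ∀ Δθ : EuclideanSpace ℝ (Fin n), ‖Δθ‖ ≤ ρ₀ →
      |L₀ (θ₀ + Δθ) - L₀ θ₀ - (1 / 2) * quadForm H₀ Δθ| ≤ C_T * ‖Δθ‖ ^ 3)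
    (μ₀ : ℝ) (hμ₀ : 0 < μ₀)
    (hlink : ∀ Δθ ∈ S, μ₀ * quadForm G Δθ ≤ quadForm H₀ Δθ) :
    ∀ ρ : ℝ, 0 < ρ → ρ ≤ ρ₀ →
      ∃ Δθ ∈ S, ‖Δθ‖ = ρ ∧
        (μ₀ / 2) * epsSq * ρ ^ 2 - C_T * ρ ^ 3 ≤ L₀ (θ₀ + Δθ) - L₀ θ₀ := by
  intro ρ hρ hρρ₀
  -- the unit sphere in S
  set K : Set (EuclideanSpace ℝ (Fin n)) := (S : Set _) ∩ Metric.sphere 0 1 with hK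
  have hKne : K.Nonempty := by
    obtain ⟨x, hxS, hx0⟩ := Submodule.exists_mem_ne_zero_of_ne_bot hS
    refine ⟨(‖x‖⁻¹ : ℝ) • x, S.smul_mem _ hxS, ?_⟩
    have hx : ‖x‖ ≠ 0 := norm_ne_zero_iff.mpr hx0
    simp [norm_smul, abs_of_nonneg (inv_nonneg.mpr (norm_nonneg x)),
      inv_mul_cancel₀ hx]
  have hKcpt : IsCompact K := by
    have h1 : IsClosed (S : Set (EuclideanSpace ℝ (Fin n))) :=
      Submodule.closed_of_finiteDimensional S
    exact ((isCompact_sphere (0 : EuclideanSpace ℝ (Fin n)) 1).inter_left h1)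
  have hcont : Continuous (quadForm G) := by
    exact Continuous.inner continuous_id
      ((Matrix.toEuclideanLin G).continuous_of_finiteDimensional)
  obtain ⟨v, hvK, hvmax⟩ := hKcpt.exists_isMaxOn hKne hcont.continuousOn
  obtain ⟨hvS, hvsph⟩ := hvK
  have hv1 : ‖v‖ = 1 := by simpa using hvsph
  -- epsSq ≤ quadForm G v
  have hsup : epsSq ≤ quadForm G v := by
    rw [heps]
    apply csSup_le
    · exact ⟨quadForm G v, v, hvS, hv1, rfl⟩
    · rintro r ⟨w, hwS, hw1, rfl⟩
      exact hvmax ⟨hwS, by simpa using hw1⟩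
  refine ⟨ρ • v, S.smul_mem _ hvS, ?_, ?_⟩
  · simp [norm_smul, hv1, abs_of_pos hρ]
  · have hnorm : ‖ρ • v‖ = ρ := by simp [norm_smul, hv1, abs_of_pos hρ]
    have hT := hTaylor (ρ • v) (by rw [hnorm]; exact hρρ₀)
    rw [hnorm] at hT
    have hqG : quadForm G (ρ • v) = ρ ^ 2 * quadForm G v := quadForm_smul G ρ v
    have hlk := hlink (ρ • v) (S.smul_mem _ hvS)
    rw [hqG] at hlk
    have habs := (abs_le.mp hT).1
    have hε : μ₀ * (ρ ^ 2 * epsSq) ≤ μ₀ * (ρ ^ 2 * quadForm G v) := by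
      have : ρ ^ 2 * epsSq ≤ ρ ^ 2 * quadForm G v :=
        mul_le_mul_of_nonneg_left hsup (sq_nonneg ρ)
      exact mul_le_mul_of_nonneg_left this hμ₀.le
    nlinarith [hε.trans hlk]
end
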